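/- Let g : [0,1] → ℝ be bounded and measurable with ∫₀¹ g(u) du = 0, let γ = R(g), and fix t ∈ [0,1). Then L(γ·1_{[0,t]})(x) = g(x) for Lebesgue-almost every x ∈ [0,t] and L(γ·1_{[0,t]})(x) = (1/(1−t)) ∫_t¹ g(u) du for Lebesgue-almost every x ∈ (t,1]; equivalently, L(γ·1_{[0,t]}) is a version of the conditional expectation E_{P₀}(g | F_{1,t}). -/

import Mathlib

open MeasureTheory Filter Set intervalIntegral

/-- The hazard rate derivative operator
`R(g)(x) = g(x) − (1/(1−x)) ∫ₓ¹ g(u) du`. -/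
noncomputable def hazardR (g : ℝ → ℝ) (x : ℝ) : ℝ :=
  g x - (1 / (1 - x)) * ∫ u in x..1, g u

/-- The inverse operator `L(γ)(x) = γ(x) − ∫₀ˣ γ(u)/(1−u) du`. -/
noncomputable def hazardL (γ : ℝ → ℝ) (x : ℝ) : ℝ :=
  γ x - ∫ u in (0:ℝ)..x, γ u / (1 - u)

/-- Let `g : [0,1] → ℝ` be bounded measurable with `∫₀¹ g = 0`, let
`γ = R(g)` and fix `t ∈ [0,1)`.  Then `L(γ·1_{[0,t]})(x) = g(x)` for a.e. `x ∈ [0,t]` and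
`L(γ·1_{[0,t]})(x) = (1/(1−t)) ∫_t¹ g(u) du` for a.e. `x ∈ (t,1]`; that is,
`L(γ·1_{[0,t]})` is a version of the conditional expectation `E_{P₀}(g | F_{1,t})`. -/
-- helper: bounded measurable on finite-measure set is integrable there
lemma integrableOn_of_bdd {f : ℝ → ℝ} {s : Set ℝ}
    (hm : AEStronglyMeasurable f (volume.restrict s)) (hs : MeasurableSet s)
    (hvol : volume s < ⊤) {K : ℝ} (hb : ∀ y ∈ s, |f y| ≤ K) :
    IntegrableOn f s := by
  haveI : IsFiniteMeasure (volume.restrict s) :=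
    ⟨by rwa [Measure.restrict_apply_univ]⟩
  refine Integrable.mono' (integrable_const K) hm ?_
  refine (ae_restrict_iff' hs).2 (ae_of_all _ ?_)
  intro y hy
  simpa [Real.norm_eq_abs] using hb y hy

-- FTC computation
lemma integral_inv_sq {a b : ℝ} (hb : b < 1) (hab : a ≤ b) :
    ∫ u in a..b, ((1 - u)⁻¹) ^ 2 = (1 - b)⁻¹ - (1 - a)⁻¹ := by
  have hne : ∀ u ∈ Set.uIcc a b, (1 : ℝ) - u ≠ 0 := by
    intro u hu
    rw [Set.uIcc_of_le hab] at hu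
    have : u < 1 := lt_of_le_of_lt hu.2 hb
    intro h; linarith
  refine intervalIntegral.integral_eq_sub_of_hasDerivAt (f := fun u => (1-u)⁻¹)
      (f' := fun u => ((1-u)⁻¹)^2) (fun u hu => ?_) ?_
  · have h1 : HasDerivAt (fun u : ℝ => 1 - u) (-1) u := (hasDerivAt_id u).const_sub 1
    have h2 := h1.inv (hne u hu)
    convert h2 using 1
    · rfl
    · rfl
    · rw [neg_neg, one_div, inv_pow]
  · refine ContinuousOn.intervalIntegrable ?_
    exact (((continuous_const.sub continuous_id).continuousOn).inv₀ hne).pow 2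

lemma keyA (f : ℝ → ℝ) (hfm : Measurable f) {C : ℝ}
    (hfb : ∀ y, |f y| ≤ C) (hfi : Integrable f)
    {x : ℝ} (hx0 : 0 ≤ x) (hx1 : x < 1) :
    ∫ u in (0:ℝ)..x, (f u - (1 / (1 - u)) * ∫ s in u..1, f s) / (1 - u)
      = (∫ s in (0:ℝ)..1, f s) - (1 / (1 - x)) * ∫ s in x..1, f s := by
  have hC : 0 ≤ C := le_trans (abs_nonneg _) (hfb 0)
  have h1x : (0:ℝ) < 1 - x := by linarith
  set h : ℝ → ℝ := fun u => ∫ s in u..1, f s with hh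
  have hii : ∀ a b : ℝ, IntervalIntegrable f volume a b := fun a b => hfi.intervalIntegrable
  have hIoc : ∀ u : ℝ, u ≤ 1 → h u = ∫ s in Ioc u 1, f s := by
    intro u hu
    rw [hh]; exact intervalIntegral.integral_of_le hu
  have hcont : Continuous h := by
    have h1 : Continuous fun u => ∫ s in (0:ℝ)..u, f s :=
      intervalIntegral.continuous_primitive hii 0
    have heq : h = fun u => (∫ s in (0:ℝ)..1, f s) - ∫ s in (0:ℝ)..u, f s := by
      funext u
      have h2 := intervalIntegral.integral_add_adjacent_intervals (hii 0 u) (hii u 1)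
      rw [hh]; dsimp only; linarith
    rw [heq]; exact continuous_const.sub h1
  have hbnd : ∀ u : ℝ, u ≤ 1 → |h u| ≤ C * (1 - u) := by
    intro u hu
    rw [hIoc u hu]
    have := norm_setIntegral_le_of_norm_le_const (μ := volume) (s := Ioc u 1) (f := f)
      (by simp [measure_Ioc_lt_top])
      (fun y _ => by simpa [Real.norm_eq_abs] using hfb y)
    simpa [Real.volume_Ioc, Real.norm_eq_abs, ENNReal.toReal_ofReal (by linarith : (0:ℝ) ≤ 1 - u),
      max_eq_left (by linarith : (0:ℝ) ≤ 1 - u)]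
      using this
  -- basic positivity facts on `Ioc 0 x`
  have h1u : ∀ u ∈ Ioc (0:ℝ) x, (0:ℝ) < 1 - u := fun u hu => by
    have := hu.2; linarith
  have hinvle : ∀ u ∈ Ioc (0:ℝ) x, (1 - u)⁻¹ ≤ (1 - x)⁻¹ := fun u hu => by
    have := hu.2
    exact inv_anti₀ h1x (by linarith)
  -- integrability of the two pieces
  have hmeas_p : Measurable fun u : ℝ => f u * (1 - u)⁻¹ :=
    hfm.mul (measurable_const.sub measurable_id).inv
  have hmeas_q : Measurable fun u : ℝ => ((1 - u)⁻¹) ^ 2 * h u :=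
    (((measurable_const.sub measurable_id).inv).pow_const 2).mul hcont.measurable
  have Ip : IntegrableOn (fun u : ℝ => f u * (1 - u)⁻¹) (Ioc 0 x) := by
    refine integrableOn_of_bdd hmeas_p.aestronglyMeasurable measurableSet_Ioc
      (by simp [measure_Ioc_lt_top]) (K := C * (1 - x)⁻¹) ?_
    intro u hu
    have h1 := h1u u hu
    calc |f u * (1 - u)⁻¹| = |f u| * |(1 - u)⁻¹| := abs_mul _ _
      _ ≤ C * (1 - x)⁻¹ := by
          refine mul_le_mul (hfb u) ?_ (abs_nonneg _) hC
          rw [abs_of_pos (inv_pos.2 h1)]; exact hinvle u hu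
  have Iq : IntegrableOn (fun u : ℝ => ((1 - u)⁻¹) ^ 2 * h u) (Ioc 0 x) := by
    refine integrableOn_of_bdd hmeas_q.aestronglyMeasurable measurableSet_Ioc
      (by simp [measure_Ioc_lt_top]) (K := C * (1 - x)⁻¹) ?_
    intro u hu
    have h1 := h1u u hu
    have e1 : |((1 - u)⁻¹) ^ 2 * h u| = ((1 - u)⁻¹) ^ 2 * |h u| := by
      rw [abs_mul, abs_of_nonneg (by positivity)]
    rw [e1]
    calc ((1 - u)⁻¹) ^ 2 * |h u| ≤ ((1 - u)⁻¹) ^ 2 * (C * (1 - u)) :=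
          mul_le_mul_of_nonneg_left (hbnd u (by linarith)) (by positivity)
      _ = C * (1 - u)⁻¹ := by field_simp
      _ ≤ C * (1 - x)⁻¹ := mul_le_mul_of_nonneg_left (hinvle u hu) hC
  have If : IntegrableOn f (Ioc (0:ℝ) x) := hfi.integrableOn
  -- rewrite the integrand on `Ioc 0 x`
  have hsc : EqOn (fun u => (f u - (1 / (1 - u)) * ∫ s in u..1, f s) / (1 - u))
      (fun u => f u * (1 - u)⁻¹ - ((1 - u)⁻¹) ^ 2 * h u) (Ioc 0 x) := by
    intro u hu
    have h1 := h1u u hu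
    have hne : (1:ℝ) - u ≠ 0 := ne_of_gt h1
    show (f u - (1 / (1 - u)) * ∫ s in u..1, f s) / (1 - u)
        = f u * (1 - u)⁻¹ - ((1 - u)⁻¹) ^ 2 * h u
    rw [hh]
    field_simp
  have step1 : ∫ u in (0:ℝ)..x, (f u - (1 / (1 - u)) * ∫ s in u..1, f s) / (1 - u)
      = (∫ u in Ioc (0:ℝ) x, f u * (1 - u)⁻¹) - ∫ u in Ioc (0:ℝ) x, ((1 - u)⁻¹) ^ 2 * h u := by
    rw [intervalIntegral.integral_of_le hx0, setIntegral_congr_fun measurableSet_Ioc hsc,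
      integral_sub Ip Iq]
  -- Fubini computation for the second piece
  have hstar : ∫ u in Ioc (0:ℝ) x, ((1 - u)⁻¹) ^ 2 * h u
      = (∫ u in Ioc (0:ℝ) x, f u * (1 - u)⁻¹) - (∫ u in Ioc (0:ℝ) x, f u)
        + ((1 - x)⁻¹ - 1) * ∫ s in Ioc x 1, f s := by
    have hSm : MeasurableSet ({p : ℝ × ℝ | p.1 < p.2} ∩ {p : ℝ × ℝ | p.2 ≤ 1}) :=
      (measurableSet_lt measurable_fst measurable_snd).inter (measurable_snd measurableSet_Iic)
    set F : ℝ × ℝ → ℝ := fun p => ((1 - p.1)⁻¹) ^ 2 * (Ioc p.1 1).indicator f p.2 with hF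
    have hFeq : F = fun p => ((1 - p.1)⁻¹) ^ 2
        * (({p : ℝ × ℝ | p.1 < p.2} ∩ {p : ℝ × ℝ | p.2 ≤ 1}).indicator (fun q => f q.2)) p := by
      funext p
      simp only [hF]
      by_cases hp : p.1 < p.2 ∧ p.2 ≤ 1
      · rw [Set.indicator_of_mem (Set.mem_Ioc.2 hp), Set.indicator_of_mem (show p ∈ {p : ℝ × ℝ | p.1 < p.2} ∩ {p : ℝ × ℝ | p.2 ≤ 1} from ⟨hp.1, hp.2⟩)]
      · rw [Set.indicator_of_notMem (fun hmem => hp (Set.mem_Ioc.1 hmem)),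
          Set.indicator_of_notMem (fun hmem => hp ⟨hmem.1, hmem.2⟩)]
    have hFmeas : Measurable F := by
      rw [hFeq]
      exact ((measurable_const.sub measurable_fst).inv.pow_const 2).mul
        ((hfm.comp measurable_snd).indicator hSm)
    have hFint : Integrable F ((volume.restrict (Ioc (0:ℝ) x)).prod volume) := by
      refine (integrable_prod_iff hFmeas.aestronglyMeasurable).2 ⟨?_, ?_⟩
      · refine ae_of_all _ fun u => ?_
        simp only [hF]
        exact (hfi.indicator measurableSet_Ioc).const_mul _
      · have hmeasInt : AEStronglyMeasurable (fun u => ∫ s, ‖F (u, s)‖)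
            (volume.restrict (Ioc (0:ℝ) x)) :=
          hFmeas.aestronglyMeasurable.norm.integral_prod_right'
        refine integrableOn_of_bdd hmeasInt measurableSet_Ioc (by simp [measure_Ioc_lt_top])
          (K := C * (1 - x)⁻¹) ?_
        intro u hu
        have h1 := h1u u hu
        have hnn : (0:ℝ) ≤ ∫ s, ‖F (u, s)‖ := integral_nonneg fun s => norm_nonneg _
        rw [abs_of_nonneg hnn]
        have e1 : (fun s => ‖F (u, s)‖)
            = fun s => ((1 - u)⁻¹) ^ 2 * ‖(Ioc u 1).indicator f s‖ := by
          funext s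
          simp only [hF]
          rw [norm_mul]
          congr 1
          rw [Real.norm_eq_abs, abs_of_nonneg (by positivity)]
        rw [e1, MeasureTheory.integral_const_mul]
        have e2 : (∫ s, ‖(Ioc u 1).indicator f s‖) = ∫ s in Ioc u 1, ‖f s‖ := by
          rw [← MeasureTheory.integral_indicator measurableSet_Ioc]
          congr 1
          funext s
          rw [norm_indicator_eq_indicator_norm]
        rw [e2]
        have hle : (∫ s in Ioc u 1, ‖f s‖) ≤ C * (1 - u) := by
          have hnorm := norm_setIntegral_le_of_norm_le_const (μ := volume) (s := Ioc u 1)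
            (f := fun s => ‖f s‖) (by simp [measure_Ioc_lt_top])
            (fun y _ => by simpa [Real.norm_eq_abs, abs_abs] using hfb y)
          rw [Real.norm_eq_abs] at hnorm
          calc (∫ s in Ioc u 1, ‖f s‖) ≤ |∫ s in Ioc u 1, ‖f s‖| := le_abs_self _
            _ ≤ C * (volume (Ioc u 1)).toReal := hnorm
            _ = C * (1 - u) := by
                rw [Real.volume_Ioc, ENNReal.toReal_ofReal (by linarith : (0:ℝ) ≤ 1 - u)]
        calc ((1 - u)⁻¹) ^ 2 * ∫ s in Ioc u 1, ‖f s‖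
            ≤ ((1 - u)⁻¹) ^ 2 * (C * (1 - u)) :=
              mul_le_mul_of_nonneg_left hle (by positivity)
          _ = C * (1 - u)⁻¹ := by field_simp
          _ ≤ C * (1 - x)⁻¹ := mul_le_mul_of_nonneg_left (hinvle u hu) hC
    have hswap := MeasureTheory.integral_integral_swap (f := fun u s => F (u, s))
      (μ := volume.restrict (Ioc (0:ℝ) x)) (ν := volume) hFint
    have lhs_eq : ∫ u in Ioc (0:ℝ) x, ((1 - u)⁻¹) ^ 2 * h u
        = ∫ u in Ioc (0:ℝ) x, ∫ s, F (u, s) := by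
      refine setIntegral_congr_fun measurableSet_Ioc fun u hu => ?_
      simp only [hF]
      rw [MeasureTheory.integral_const_mul, MeasureTheory.integral_indicator measurableSet_Ioc,
        ← hIoc u (by linarith [hu.2])]
    have rhs_eq : (fun s => ∫ u in Ioc (0:ℝ) x, F (u, s))
        = fun s => (Ioc (0:ℝ) x).indicator (fun s => f s * ((1 - s)⁻¹ - 1)) s
            + (Ioc x 1).indicator (fun s => f s * ((1 - x)⁻¹ - 1)) s := by
      funext s
      by_cases hs1 : s ∈ Ioc (0:ℝ) x
      · rw [Set.indicator_of_mem hs1,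
          Set.indicator_of_notMem (fun hmem => absurd hs1.2 (not_le.2 hmem.1)), add_zero]
        have hs0 : 0 < s := hs1.1
        have hsx : s ≤ x := hs1.2
        have hs_lt1 : s < 1 := lt_of_le_of_lt hsx hx1
        have e : (fun u => F (u, s)) = fun u =>
            (Iio s).indicator (fun u => f s * ((1 - u)⁻¹) ^ 2) u := by
          funext u
          simp only [hF]
          by_cases hus : u < s
          · rw [Set.indicator_of_mem (Set.mem_Ioc.2 ⟨hus, hs_lt1.le⟩),
              Set.indicator_of_mem (Set.mem_Iio.2 hus)]
            ring
          · rw [Set.indicator_of_notMem (fun hmem => hus (Set.mem_Ioc.1 hmem).1),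
              Set.indicator_of_notMem (fun hmem => hus (Set.mem_Iio.1 hmem))]
            ring
        rw [e, setIntegral_indicator measurableSet_Iio]
        have hinter : Ioc (0:ℝ) x ∩ Iio s = Ioo 0 s := by
          ext u
          simp only [Set.mem_inter_iff, Set.mem_Ioc, Set.mem_Iio, Set.mem_Ioo]
          constructor
          · rintro ⟨⟨a, b⟩, c⟩; exact ⟨a, c⟩
          · rintro ⟨a, c⟩; exact ⟨⟨a, le_trans c.le hsx⟩, c⟩
        rw [hinter, ← MeasureTheory.integral_Ioc_eq_integral_Ioo,
          ← intervalIntegral.integral_of_le hs0.le, intervalIntegral.integral_const_mul,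
          integral_inv_sq hs_lt1 hs0.le]
        norm_num
      · by_cases hs2 : s ∈ Ioc x 1
        · rw [Set.indicator_of_notMem hs1, Set.indicator_of_mem hs2, zero_add]
          have e : EqOn (fun u => F (u, s)) (fun u => f s * ((1 - u)⁻¹) ^ 2) (Ioc (0:ℝ) x) := by
            intro u hu
            simp only [hF]
            rw [Set.indicator_of_mem (Set.mem_Ioc.2 ⟨lt_of_le_of_lt hu.2 hs2.1, hs2.2⟩)]
            ring
          rw [setIntegral_congr_fun measurableSet_Ioc e, MeasureTheory.integral_const_mul,
            ← intervalIntegral.integral_of_le hx0, integral_inv_sq hx1 hx0]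
          norm_num
        · rw [Set.indicator_of_notMem hs1, Set.indicator_of_notMem hs2]
          have hs' : s ≤ 0 ∨ 1 < s := by
            by_contra hcon
            push_neg at hcon
            obtain ⟨hpos, hle⟩ := hcon
            rcases le_or_gt s x with hc | hc
            · exact hs1 ⟨hpos, hc⟩
            · exact hs2 ⟨hc, hle⟩
          have e : EqOn (fun u => F (u, s)) (fun _ => (0:ℝ)) (Ioc (0:ℝ) x) := by
            intro u hu
            simp only [hF]
            rw [Set.indicator_of_notMem]
            · ring
            · intro hmem
              rcases hs' with h' | h'
              · exact absurd (lt_trans hu.1 (Set.mem_Ioc.1 hmem).1) (not_lt.2 h')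
              · exact absurd (Set.mem_Ioc.1 hmem).2 (not_le.2 h')
          rw [setIntegral_congr_fun measurableSet_Ioc e]
          simp
    have ind1_int : Integrable ((Ioc (0:ℝ) x).indicator fun s => f s * ((1 - s)⁻¹ - 1)) := by
      refine (integrable_indicator_iff measurableSet_Ioc).2 ?_
      refine integrableOn_of_bdd
        (hfm.mul (((measurable_const.sub measurable_id).inv).sub measurable_const)).aestronglyMeasurable
        measurableSet_Ioc (by simp [measure_Ioc_lt_top]) (K := C * ((1 - x)⁻¹ + 1)) ?_
      intro s hs
      have h1 := h1u s hs
      have h2 : (0:ℝ) < (1 - s)⁻¹ := inv_pos.2 h1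
      have h3 := hinvle s hs
      have habs : |(1 - s)⁻¹ - 1| ≤ (1 - x)⁻¹ + 1 :=
        abs_le.2 ⟨by linarith, by linarith⟩
      calc |f s * ((1 - s)⁻¹ - 1)| = |f s| * |(1 - s)⁻¹ - 1| := abs_mul _ _
        _ ≤ C * ((1 - x)⁻¹ + 1) := mul_le_mul (hfb s) habs (abs_nonneg _) hC
    have ind2_int : Integrable ((Ioc x 1).indicator fun s => f s * ((1 - x)⁻¹ - 1)) := by
      refine (integrable_indicator_iff measurableSet_Ioc).2 ?_
      refine integrableOn_of_bdd (hfm.mul_const _).aestronglyMeasurable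
        measurableSet_Ioc (by simp [measure_Ioc_lt_top]) (K := C * |(1 - x)⁻¹ - 1|) ?_
      intro s _
      calc |f s * ((1 - x)⁻¹ - 1)| = |f s| * |(1 - x)⁻¹ - 1| := abs_mul _ _
        _ ≤ C * |(1 - x)⁻¹ - 1| := mul_le_mul_of_nonneg_right (hfb s) (abs_nonneg _)
    rw [lhs_eq, hswap, rhs_eq, integral_add ind1_int ind2_int,
      MeasureTheory.integral_indicator measurableSet_Ioc,
      MeasureTheory.integral_indicator measurableSet_Ioc]
    congr 1
    · have e : EqOn (fun s => f s * ((1 - s)⁻¹ - 1)) (fun s => f s * (1 - s)⁻¹ - f s)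
          (Ioc (0:ℝ) x) := fun s _ => by ring
      rw [setIntegral_congr_fun measurableSet_Ioc e, integral_sub Ip If]
    · have e : EqOn (fun s => f s * ((1 - x)⁻¹ - 1)) (fun s => ((1 - x)⁻¹ - 1) * f s)
          (Ioc x 1) := fun s _ => by ring
      rw [setIntegral_congr_fun measurableSet_Ioc e, MeasureTheory.integral_const_mul]
  -- splitting of the full integral
  have hsplit : h 0 = (∫ u in Ioc (0:ℝ) x, f u) + ∫ s in Ioc x 1, f s := by
    have h2 := intervalIntegral.integral_add_adjacent_intervals (hii 0 x) (hii x 1)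
    rw [hIoc 0 (by norm_num), ← intervalIntegral.integral_of_le (by norm_num : (0:ℝ) ≤ 1), ← h2,
      intervalIntegral.integral_of_le hx0, intervalIntegral.integral_of_le hx1.le]
  have hx' : (∫ s in x..1, f s) = ∫ s in Ioc x 1, f s := intervalIntegral.integral_of_le hx1.le
  rw [step1, hstar]
  rw [show (∫ s in (0:ℝ)..1, f s) = h 0 from rfl, hx', one_div]
  rw [hsplit]
  ring

theorem statement12
    (g : ℝ → ℝ) (hgm : Measurable g)
    (C : ℝ) (hgb : ∀ y ∈ Set.Icc (0:ℝ) 1, |g y| ≤ C)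
    (hg0 : ∫ y in Set.Icc (0:ℝ) 1, g y = 0)
    (t : ℝ) (ht : t ∈ Set.Ico (0:ℝ) 1)
    (γt : ℝ → ℝ) (hγt : γt = Set.indicator (Set.Icc 0 t) (hazardR g)) :
    (∀ᵐ x ∂(volume.restrict (Set.Icc (0:ℝ) t)), hazardL γt x = g x) ∧
    (∀ᵐ x ∂(volume.restrict (Set.Ioc t 1)),
      hazardL γt x = (1 / (1 - t)) * ∫ u in t..1, g u) := by
  have hC : 0 ≤ C := le_trans (abs_nonneg _) (hgb 0 ⟨le_refl 0, zero_le_one⟩)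
  set f : ℝ → ℝ := (Icc (0:ℝ) 1).indicator g with hf
  have hfb : ∀ y, |f y| ≤ C := by
    intro y
    by_cases hy : y ∈ Icc (0:ℝ) 1
    · rw [hf, Set.indicator_of_mem hy]; exact hgb y hy
    · rw [hf, Set.indicator_of_notMem hy]; simpa using hC
  have hfm : Measurable f := hgm.indicator measurableSet_Icc
  have hfi : Integrable f := by
    rw [hf]
    refine (integrable_indicator_iff measurableSet_Icc).2 ?_
    exact integrableOn_of_bdd hgm.aestronglyMeasurable measurableSet_Icc
      (by simp [measure_Icc_lt_top]) hgb
  have hIeq : ∀ a b : ℝ, a ∈ Icc (0:ℝ) 1 → b ∈ Icc (0:ℝ) 1 →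
      (∫ s in a..b, f s) = ∫ s in a..b, g s := by
    intro a b ha hb
    refine intervalIntegral.integral_congr fun u hu => ?_
    have h1 : min a b ≤ u ∧ u ≤ max a b := by
      simpa [Set.uIcc, Set.mem_Icc] using hu
    have h2 : u ∈ Icc (0:ℝ) 1 :=
      ⟨le_trans (le_min ha.1 hb.1) h1.1, le_trans h1.2 (max_le ha.2 hb.2)⟩
    exact Set.indicator_of_mem h2 g
  have hR : ∀ u ∈ Icc (0:ℝ) 1, hazardR g u = hazardR f u := by
    intro u hu
    have h1 : f u = g u := Set.indicator_of_mem hu g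
    have h2 : (∫ s in u..1, f s) = ∫ s in u..1, g s :=
      hIeq u 1 hu ⟨zero_le_one, le_refl 1⟩
    simp only [hazardR, h1, h2]
  have hI01 : (∫ s in (0:ℝ)..1, f s) = 0 := by
    have e : (∫ s in Icc (0:ℝ) 1, f s) = ∫ s in Icc (0:ℝ) 1, g s :=
      setIntegral_congr_fun measurableSet_Icc fun s hs => Set.indicator_of_mem hs g
    rw [intervalIntegral.integral_of_le zero_le_one,
      ← MeasureTheory.integral_Icc_eq_integral_Ioc, e, hg0]
  have ht0 : (0:ℝ) ≤ t := ht.1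
  have ht1 : t < 1 := ht.2
  have h1t : (0:ℝ) < 1 - t := by linarith
  have hii : ∀ a b : ℝ, IntervalIntegrable f volume a b := fun a b => hfi.intervalIntegrable
  have hcont : Continuous fun u : ℝ => ∫ s in u..1, f s := by
    have h1 : Continuous fun u => ∫ s in (0:ℝ)..u, f s :=
      intervalIntegral.continuous_primitive hii 0
    have heq : (fun u : ℝ => ∫ s in u..1, f s)
        = fun u => (∫ s in (0:ℝ)..1, f s) - ∫ s in (0:ℝ)..u, f s := by
      funext u
      have h2 := intervalIntegral.integral_add_adjacent_intervals (hii 0 u) (hii u 1)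
      linarith
    rw [heq]; exact continuous_const.sub h1
  have hbnd : ∀ u : ℝ, u ≤ 1 → |∫ s in u..1, f s| ≤ C * (1 - u) := by
    intro u hu
    rw [intervalIntegral.integral_of_le hu]
    have := norm_setIntegral_le_of_norm_le_const (μ := volume) (s := Ioc u 1) (f := f)
      (by simp [measure_Ioc_lt_top])
      (fun y _ => by simpa [Real.norm_eq_abs] using hfb y)
    simpa [Real.volume_Ioc, Real.norm_eq_abs, ENNReal.toReal_ofReal (by linarith : (0:ℝ) ≤ 1 - u),
      max_eq_left (by linarith : (0:ℝ) ≤ 1 - u)]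
      using this
  -- integrability of `hazardR f / (1-·)` on `Ioc 0 t`
  have IIon : IntegrableOn
      (fun u => (f u - (1 / (1 - u)) * ∫ s in u..1, f s) / (1 - u)) (Ioc 0 t) := by
    have hmeas : Measurable fun u => (f u - (1 / (1 - u)) * ∫ s in u..1, f s) / (1 - u) :=
      (hfm.sub (((measurable_const.div (measurable_const.sub measurable_id))).mul
        hcont.measurable)).div (measurable_const.sub measurable_id)
    refine integrableOn_of_bdd hmeas.aestronglyMeasurable measurableSet_Ioc
      (by simp [measure_Ioc_lt_top]) (K := 2 * C * (1 - t)⁻¹) ?_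
    intro u hu
    have h1u : (0:ℝ) < 1 - u := by have := hu.2; linarith
    have hnum : |f u - (1 / (1 - u)) * ∫ s in u..1, f s| ≤ 2 * C := by
      have h2 : |(1 / (1 - u)) * ∫ s in u..1, f s| ≤ C := by
        rw [abs_mul, abs_of_pos (by positivity : (0:ℝ) < 1 / (1 - u))]
        have := mul_le_mul_of_nonneg_left (hbnd u (by linarith)) (by positivity : (0:ℝ) ≤ 1 / (1 - u))
        calc 1 / (1 - u) * |∫ s in u..1, f s| ≤ 1 / (1 - u) * (C * (1 - u)) := this
          _ = C := by field_simp
      calc |f u - (1 / (1 - u)) * ∫ s in u..1, f s|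
          ≤ |f u| + |(1 / (1 - u)) * ∫ s in u..1, f s| := abs_sub _ _
        _ ≤ 2 * C := by have := hfb u; linarith
    have hinv : (1 - u)⁻¹ ≤ (1 - t)⁻¹ := by
      have := hu.2
      exact inv_anti₀ h1t (by linarith)
    calc |(f u - (1 / (1 - u)) * ∫ s in u..1, f s) / (1 - u)|
        = |f u - (1 / (1 - u)) * ∫ s in u..1, f s| * (1 - u)⁻¹ := by
          rw [abs_div, div_eq_mul_inv, abs_of_pos h1u]
      _ ≤ 2 * C * (1 - t)⁻¹ :=
          mul_le_mul hnum hinv (by positivity) (by positivity)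
  -- the integral congruence on `[0, x]` for `x ≤ t`
  have hcongr : ∀ x : ℝ, 0 ≤ x → x ≤ t →
      (∫ u in (0:ℝ)..x, γt u / (1 - u))
        = ∫ u in (0:ℝ)..x, (f u - (1 / (1 - u)) * ∫ s in u..1, f s) / (1 - u) := by
    intro x hx0 hxt
    refine intervalIntegral.integral_congr fun u hu => ?_
    rw [Set.uIcc_of_le hx0] at hu
    have hut : u ∈ Icc (0:ℝ) t := ⟨hu.1, le_trans hu.2 hxt⟩
    have hu1 : u ∈ Icc (0:ℝ) 1 := ⟨hu.1, le_trans hut.2 ht1.le⟩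
    show γt u / (1 - u) = _
    rw [hγt, Set.indicator_of_mem hut, hR u hu1]
    rfl
  constructor
  · -- a.e. on `[0, t]`
    refine (ae_restrict_iff' measurableSet_Icc).2 (ae_of_all _ fun x hx => ?_)
    have hx0 : (0:ℝ) ≤ x := hx.1
    have hx1 : x < 1 := lt_of_le_of_lt hx.2 ht1
    have key := keyA f hfm hfb hfi hx0 hx1
    have hx01 : x ∈ Icc (0:ℝ) 1 := ⟨hx0, hx1.le⟩
    have h2 : (∫ s in x..1, f s) = ∫ s in x..1, g s :=
      hIeq x 1 hx01 ⟨zero_le_one, le_refl 1⟩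
    show γt x - (∫ u in (0:ℝ)..x, γt u / (1 - u)) = g x
    rw [hcongr x hx0 hx.2, key, hI01, hγt, Set.indicator_of_mem hx]
    simp only [hazardR, h2]
    ring
  · -- a.e. on `(t, 1]`
    refine (ae_restrict_iff' measurableSet_Ioc).2 (ae_of_all _ fun x hx => ?_)
    have htx : t ≤ x := hx.1.le
    have hγ0 : γt x = 0 := by
      rw [hγt]
      exact Set.indicator_of_notMem (fun hmem => absurd hmem.2 (not_le.2 hx.1)) _
    have II1 : IntervalIntegrable (fun u => γt u / (1 - u)) volume 0 t := by
      rw [intervalIntegrable_iff, Set.uIoc_of_le ht0]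
      refine IIon.congr_fun (fun u hu => ?_) measurableSet_Ioc
      have hut : u ∈ Icc (0:ℝ) t := ⟨hu.1.le, hu.2⟩
      have hu1 : u ∈ Icc (0:ℝ) 1 := ⟨hut.1, le_trans hut.2 ht1.le⟩
      show _ = γt u / (1 - u)
      rw [hγt, Set.indicator_of_mem hut, hR u hu1]
      rfl
    have hzero : EqOn (fun u => γt u / (1 - u)) (fun _ => (0:ℝ)) (Ioc t x) := by
      intro u hu
      have : γt u = 0 := by
        rw [hγt]
        exact Set.indicator_of_notMem (fun hmem => absurd hmem.2 (not_le.2 hu.1)) _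
      show γt u / (1 - u) = 0
      rw [this, zero_div]
    have II2 : IntervalIntegrable (fun u => γt u / (1 - u)) volume t x := by
      rw [intervalIntegrable_iff, Set.uIoc_of_le htx]
      exact (integrableOn_zero).congr_fun (fun u hu => (hzero hu).symm) measurableSet_Ioc
    have hsplit := intervalIntegral.integral_add_adjacent_intervals II1 II2
    have val2 : (∫ u in t..x, γt u / (1 - u)) = 0 := by
      rw [intervalIntegral.integral_of_le htx,
        setIntegral_congr_fun measurableSet_Ioc hzero]
      simp
    have key := keyA f hfm hfb hfi ht0 ht1
    have h2 : (∫ s in t..1, f s) = ∫ s in t..1, g s :=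
      hIeq t 1 ⟨ht0, ht1.le⟩ ⟨zero_le_one, le_refl 1⟩
    have val1 : (∫ u in (0:ℝ)..t, γt u / (1 - u))
        = -((1 / (1 - t)) * ∫ u in t..1, g u) := by
      rw [hcongr t ht0 (le_refl t), key, hI01, h2]
      ring
    show γt x - (∫ u in (0:ℝ)..x, γt u / (1 - u)) = (1 / (1 - t)) * ∫ u in t..1, g u
    rw [hγ0, ← hsplit, val1, val2]
    ring
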